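/- Let α ≥ 0, d > 0, k > 0, γ > 0, T₀ > 0. Then there exists a unique μ > 0 such that k T₀ / (2^{α+1} d^{α/2+1} γ) = μ^{α+2} M(α/2 + 1, 3/2, μ²). -/

import Mathlib

open Real Filter Topology

/-- The Kummer confluent hypergeometric function `M(a,b,z)`, defined by its power series. -/
noncomputable def kummerM (a b z : ℝ) : ℝ :=
  ∑' s : ℕ, ((ascPochhammer ℝ s).eval a / ((ascPochhammer ℝ s).eval b * (Nat.factorial s : ℝ)))
      * z ^ s

/-- Coefficients of the Kummer series with `b = 3/2`. -/
noncomputable def kummerC (a : ℝ) (s : ℕ) : ℝ :=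
  (ascPochhammer ℝ s).eval a / ((ascPochhammer ℝ s).eval (3/2 : ℝ) * (Nat.factorial s : ℝ))

lemma kummerC_pos {a : ℝ} (ha : 0 < a) (s : ℕ) : 0 < kummerC a s := by
  have h1 := ascPochhammer_pos s a ha
  have h2 := ascPochhammer_pos s (3/2 : ℝ) (by norm_num)
  have h3 : (0:ℝ) < s.factorial := by positivity
  exact div_pos h1 (by positivity)

lemma kummerC_zero (a : ℝ) : kummerC a 0 = 1 := by
  simp [kummerC, ascPochhammer_zero]

lemma poch_le {a b : ℝ} (ha : 0 < a) (hb : 0 < b) (s : ℕ) :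
    (ascPochhammer ℝ s).eval a ≤ (max 1 (a/b)) ^ s * (ascPochhammer ℝ s).eval b := by
  set M := max 1 (a/b) with hM
  have hM1 : 1 ≤ M := le_max_left _ _
  have hMb : a ≤ M * b := by
    calc a = (a/b) * b := by field_simp
    _ ≤ M * b := by nlinarith [le_max_right 1 (a/b)]
  induction s with
  | zero => simp
  | succ n ih =>
    rw [ascPochhammer_succ_eval, ascPochhammer_succ_eval]
    have hpa := ascPochhammer_pos n a ha
    have hpb := ascPochhammer_pos n b hb
    have han : a + n ≤ M * (b + n) := by nlinarith
    calc Polynomial.eval a (ascPochhammer ℝ n) * (a + n)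
        ≤ (M ^ n * Polynomial.eval b (ascPochhammer ℝ n)) * (M * (b + n)) := by
          apply mul_le_mul ih han (by positivity)
          positivity
      _ = M ^ (n+1) * (Polynomial.eval b (ascPochhammer ℝ n) * (b + n)) := by ring

lemma kummerC_le {a : ℝ} (ha : 0 < a) (s : ℕ) :
    kummerC a s ≤ (max 1 (a/(3/2))) ^ s / s.factorial := by
  have h2 := ascPochhammer_pos s (3/2 : ℝ) (by norm_num)
  have h3 : (0:ℝ) < s.factorial := by positivity
  rw [kummerC, div_le_div_iff₀ (by positivity) h3]
  have := poch_le ha (show (0:ℝ) < 3/2 by norm_num) s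
  calc Polynomial.eval a (ascPochhammer ℝ s) * s.factorial
      ≤ ((max 1 (a/(3/2))) ^ s * Polynomial.eval (3/2:ℝ) (ascPochhammer ℝ s)) * s.factorial := by
        nlinarith
    _ = max 1 (a/(3/2)) ^ s * (Polynomial.eval (3/2:ℝ) (ascPochhammer ℝ s) * s.factorial) := by
        ring

lemma kummer_bound {a : ℝ} (ha : 0 < a) (z : ℝ) (s : ℕ) :
    ‖kummerC a s * z ^ s‖ ≤ (max 1 (a/(3/2)) * |z|) ^ s / s.factorial := by
  have h1 := (kummerC_pos ha s).le
  have h2 := kummerC_le ha s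
  have h3 : (0:ℝ) < s.factorial := by positivity
  rw [norm_mul, norm_pow, Real.norm_eq_abs, Real.norm_eq_abs, abs_of_nonneg h1, mul_pow,
    mul_div_assoc]
  calc kummerC a s * |z| ^ s ≤ (max 1 (a/(3/2)) ^ s / s.factorial) * |z| ^ s := by
        apply mul_le_mul_of_nonneg_right h2 (by positivity)
    _ = max 1 (a/(3/2)) ^ s * (|z| ^ s / s.factorial) := by ring

lemma kummer_summable {a : ℝ} (ha : 0 < a) (z : ℝ) :
    Summable fun s : ℕ => kummerC a s * z ^ s := by
  apply Summable.of_norm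
  apply Summable.of_nonneg_of_le (fun s => norm_nonneg _) (kummer_bound ha z)
  exact Real.summable_pow_div_factorial _

lemma kummerM_eq (a z : ℝ) : kummerM a (3/2) z = ∑' s : ℕ, kummerC a s * z ^ s := rfl

lemma one_le_kummerM {a : ℝ} (ha : 0 < a) {z : ℝ} (hz : 0 ≤ z) :
    1 ≤ kummerM a (3/2) z := by
  rw [kummerM_eq]
  have h0 : kummerC a 0 * z ^ 0 = 1 := by simp [kummerC_zero]
  calc (1:ℝ) = ∑ s ∈ ({0} : Finset ℕ), kummerC a s * z ^ s := by
        rw [Finset.sum_singleton, h0]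
    _ ≤ ∑' s : ℕ, kummerC a s * z ^ s := by
        apply Summable.sum_le_tsum _
          (fun i _ => mul_nonneg (kummerC_pos ha i).le (pow_nonneg hz i))
          (kummer_summable ha z)

lemma kummerM_strictMono {a : ℝ} (ha : 0 < a) {x y : ℝ} (hx : 0 ≤ x) (hxy : x < y) :
    kummerM a (3/2) x < kummerM a (3/2) y := by
  rw [kummerM_eq, kummerM_eq]
  refine Summable.tsum_lt_tsum_of_nonneg (i := 1)
    (fun s => mul_nonneg (kummerC_pos ha s).le (pow_nonneg hx s))
    (fun s => ?_) ?_ (kummer_summable ha y)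
  · exact mul_le_mul_of_nonneg_left (pow_le_pow_left₀ hx hxy.le s) (kummerC_pos ha s).le
  · have := kummerC_pos ha 1
    simpa using (mul_lt_mul_of_pos_left (by simpa using hxy) this)

lemma kummerM_mono {a : ℝ} (ha : 0 < a) {x y : ℝ} (hx : 0 ≤ x) (hxy : x ≤ y) :
    kummerM a (3/2) x ≤ kummerM a (3/2) y := by
  rcases eq_or_lt_of_le hxy with h | h
  · rw [h]
  · exact (kummerM_strictMono ha hx h).le

lemma kummerM_continuousOn {a : ℝ} (ha : 0 < a) (R : ℝ) :
    ContinuousOn (fun z => kummerM a (3/2) z) (Set.Icc (-R) R) := by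
  have h : ∀ z ∈ Set.Icc (-R) R, kummerM a (3/2) z = ∑' s : ℕ, kummerC a s * z ^ s :=
    fun z _ => kummerM_eq a z
  have := tendstoUniformlyOn_tsum (f := fun (s : ℕ) (z : ℝ) => kummerC a s * z ^ s)
    (u := fun s => (max 1 (a/(3/2)) * |R|) ^ s / s.factorial)
    (Real.summable_pow_div_factorial _) (s := Set.Icc (-R) R) ?_
  · have hc : ContinuousOn (fun z => ∑' s : ℕ, kummerC a s * z ^ s) (Set.Icc (-R) R) := by
      apply this.continuousOn
      refine Filter.Eventually.frequently ?_
      filter_upwards with t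
      exact (continuous_finset_sum t fun i _ => by continuity).continuousOn
    exact hc.congr h
  · intro n z hz
    refine (kummer_bound ha z n).trans ?_
    have hzR : |z| ≤ |R| := by
      rw [abs_le]
      exact ⟨le_trans (neg_le_neg (le_abs_self R)) hz.1, le_trans hz.2 (le_abs_self R)⟩
    have hM : (0:ℝ) ≤ max 1 (a/(3/2)) := le_trans zero_le_one (le_max_left _ _)
    have h1 : (max 1 (a/(3/2)) * |z|) ^ n ≤ (max 1 (a/(3/2)) * |R|) ^ n :=
      pow_le_pow_left₀ (mul_nonneg hM (abs_nonneg _))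
        (mul_le_mul_of_nonneg_left hzR hM) n
    have hfac : (0:ℝ) < n.factorial := by positivity
    exact (div_le_div_iff_of_pos_right hfac).mpr h1

/-- unique free-boundary coefficient for the temperature problem (P2). -/
theorem exists_unique_mu_P2 (α d k γ T₀ : ℝ)
    (hα : 0 ≤ α) (hd : 0 < d) (hk : 0 < k) (hγ : 0 < γ) (hT : 0 < T₀) :
    ∃! μ : ℝ, 0 < μ ∧
      k * T₀ / (2 ^ (α + 1) * d ^ (α / 2 + 1) * γ)
        = μ ^ (α + 2) * kummerM (α / 2 + 1) (3 / 2) (μ ^ 2) := by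
  set a : ℝ := α / 2 + 1 with ha_def
  have ha : 0 < a := by positivity
  set C : ℝ := k * T₀ / (2 ^ (α + 1) * d ^ (α / 2 + 1) * γ) with hC_def
  have hC : 0 < C := by
    apply div_pos (by positivity)
    have h1 : (0:ℝ) < (2:ℝ) ^ (α + 1) := Real.rpow_pos_of_pos (by norm_num) _
    have h2 : (0:ℝ) < d ^ (α / 2 + 1) := Real.rpow_pos_of_pos hd _
    positivity
  set F : ℝ → ℝ := fun μ => μ ^ (α + 2) * kummerM a (3/2) (μ ^ 2) with hF_def
  have hexp : (0:ℝ) < α + 2 := by linarith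
  -- F is strictly monotone on positives
  have hmono : ∀ x y : ℝ, 0 < x → x < y → F x < F y := by
    intro x y hx hxy
    have h1 : x ^ (α + 2) < y ^ (α + 2) := Real.rpow_lt_rpow hx.le hxy hexp
    have h2 : kummerM a (3/2) (x ^ 2) < kummerM a (3/2) (y ^ 2) :=
      kummerM_strictMono ha (by positivity) (by nlinarith)
    have h3 : (0:ℝ) ≤ x ^ (α + 2) := (Real.rpow_pos_of_pos hx _).le
    have h4 : (0:ℝ) ≤ kummerM a (3/2) (x ^ 2) :=
      le_trans zero_le_one (one_le_kummerM ha (by positivity))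
    exact mul_lt_mul'' h1 h2 h3 h4
  -- upper endpoint
  set μhi : ℝ := max 1 C with hμhi_def
  have hμhi1 : (1:ℝ) ≤ μhi := le_max_left _ _
  have hhi : C ≤ F μhi := by
    have h1 : μhi ≤ μhi ^ (α + 2) := by
      calc μhi = μhi ^ (1:ℝ) := (Real.rpow_one _).symm
        _ ≤ μhi ^ (α + 2) := Real.rpow_le_rpow_of_exponent_le hμhi1 (by linarith)
    have h2 : (1:ℝ) ≤ kummerM a (3/2) (μhi ^ 2) := one_le_kummerM ha (by positivity)
    calc C ≤ μhi := le_max_right _ _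
      _ ≤ μhi ^ (α + 2) := h1
      _ = μhi ^ (α + 2) * 1 := (mul_one _).symm
      _ ≤ F μhi := by
          apply mul_le_mul_of_nonneg_left h2
          exact (Real.rpow_pos_of_pos (by linarith) _).le
  -- lower endpoint
  have hg1 : (0:ℝ) < kummerM a (3/2) 1 :=
    lt_of_lt_of_le one_pos (one_le_kummerM ha zero_le_one)
  set t : ℝ := min 1 (C / kummerM a (3/2) 1) with ht_def
  have ht0 : 0 < t := lt_min one_pos (div_pos hC hg1)
  have ht1 : t ≤ 1 := min_le_left _ _
  set μlo : ℝ := t ^ (α + 2)⁻¹ with hμlo_def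
  have hμlo0 : 0 < μlo := Real.rpow_pos_of_pos ht0 _
  have hμlo1 : μlo ≤ 1 := Real.rpow_le_one ht0.le ht1 (by positivity)
  have hμlo_pow : μlo ^ (α + 2) = t := by
    rw [hμlo_def, ← Real.rpow_mul ht0.le,
      inv_mul_cancel₀ (by linarith : α + 2 ≠ 0), Real.rpow_one]
  have hlo : F μlo ≤ C := by
    have hsq : μlo ^ 2 ≤ 1 := by nlinarith
    have h2 : kummerM a (3/2) (μlo ^ 2) ≤ kummerM a (3/2) 1 :=
      kummerM_mono ha (by positivity) hsq
    have h4 : (0:ℝ) ≤ kummerM a (3/2) (μlo ^ 2) :=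
      le_trans zero_le_one (one_le_kummerM ha (by positivity))
    calc F μlo = t * kummerM a (3/2) (μlo ^ 2) := by rw [hF_def]; simp [hμlo_pow]
      _ ≤ t * kummerM a (3/2) 1 := mul_le_mul_of_nonneg_left h2 ht0.le
      _ ≤ (C / kummerM a (3/2) 1) * kummerM a (3/2) 1 :=
          mul_le_mul_of_nonneg_right (min_le_right _ _) (le_trans zero_le_one
            (one_le_kummerM ha zero_le_one))
      _ = C := div_mul_cancel₀ _ hg1.ne'
  have hle : μlo ≤ μhi := le_trans hμlo1 hμhi1
  -- continuity of F on [μlo, μhi]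
  have hcont : ContinuousOn F (Set.Icc μlo μhi) := by
    apply ContinuousOn.mul
    · exact (Real.continuous_rpow_const hexp.le).continuousOn
    · apply (kummerM_continuousOn ha (μhi ^ 2)).comp
        ((continuous_pow 2).continuousOn)
      intro x hx
      have hx0 : 0 < x := lt_of_lt_of_le hμlo0 hx.1
      have h1 : x ^ 2 ≤ μhi ^ 2 := by nlinarith [hx.2]
      have h2 : -(μhi ^ 2) ≤ x ^ 2 := by nlinarith [sq_nonneg x, sq_nonneg μhi]
      exact ⟨h2, h1⟩
  have hmem : C ∈ Set.Icc (F μlo) (F μhi) := ⟨hlo, hhi⟩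
  obtain ⟨μ, hμmem, hμeq⟩ := intermediate_value_Icc hle hcont hmem
  have hμpos : 0 < μ := lt_of_lt_of_le hμlo0 hμmem.1
  refine ⟨μ, ⟨hμpos, hμeq.symm⟩, ?_⟩
  rintro y ⟨hy, hyeq⟩
  have hFy : F y = C := hyeq.symm
  have hFμ : F μ = C := hμeq
  rcases lt_trichotomy y μ with h | h | h
  · have h2 := hmono y μ hy h
    rw [hFy, hFμ] at h2
    exact absurd h2 (lt_irrefl C)
  · exact h
  · have h2 := hmono μ y hμpos h
    rw [hFy, hFμ] at h2
    exact absurd h2 (lt_irrefl C)
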